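/- Let λ, μ, g0 ≥ 0 and let 0 < p_{j+1} < p_j; set a = λ + μ·g0 and Δ = p_j − p_{j+1}. If p_j − p_{j+1}·e^{aΔ} > 0, then g1* = (e^{aΔ} − 1)/(p_j − p_{j+1}·e^{aΔ}) is nonnegative and is the unique g1 ≥ 0 satisfying log(1 + g1·p_j) − a·p_j = log(1 + g1·p_{j+1}) − a·p_{j+1}. -/

import Mathlib

open Real

/-- The boundary value `g1* = (e^{aΔ} - 1)/(p_j - p_{j+1} e^{aΔ})` (with
`a = λ + μ g0`, `Δ = p_j - p_{j+1}`) is the unique nonnegative channel gain at which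
the per-realization Lagrangians of two adjacent power levels coincide. -/
theorem adjacent_region_boundary_unique
    (lam mu g0 : ℝ) (hlam : 0 ≤ lam) (hmu : 0 ≤ mu) (hg0 : 0 ≤ g0)
    (pj pj1 : ℝ) (hpj1 : 0 < pj1) (hlt : pj1 < pj)
    (a Δ : ℝ) (ha : a = lam + mu * g0) (hΔ : Δ = pj - pj1)
    (hden : 0 < pj - pj1 * Real.exp (a * Δ)) :
    0 ≤ (Real.exp (a * Δ) - 1) / (pj - pj1 * Real.exp (a * Δ)) ∧
    (Real.log (1 + ((Real.exp (a * Δ) - 1) / (pj - pj1 * Real.exp (a * Δ))) * pj) - a * pj =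
      Real.log (1 + ((Real.exp (a * Δ) - 1) / (pj - pj1 * Real.exp (a * Δ))) * pj1) - a * pj1) ∧
    ∀ g1 : ℝ, 0 ≤ g1 →
      Real.log (1 + g1 * pj) - a * pj = Real.log (1 + g1 * pj1) - a * pj1 →
      g1 = (Real.exp (a * Δ) - 1) / (pj - pj1 * Real.exp (a * Δ)) := by
  have ha0 : 0 ≤ a := by rw [ha]; positivity
  have hΔ0 : 0 < Δ := by rw [hΔ]; linarith
  have haΔ : 0 ≤ a * Δ := mul_nonneg ha0 hΔ0.le
  set E := Real.exp (a * Δ) with hE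
  have hE1 : 1 ≤ E := Real.one_le_exp haΔ
  have hD : 0 < pj - pj1 * E := hden
  have hdiff : 0 < pj - pj1 := by linarith
  refine ⟨div_nonneg (by linarith) hD.le, ?_, ?_⟩
  · have h1 : 1 + (E - 1) / (pj - pj1 * E) * pj = E * ((pj - pj1) / (pj - pj1 * E)) := by
      have := hD.ne'; rw [div_mul_eq_mul_div, one_add_div this, ← mul_div_assoc, div_eq_div_iff this this]; ring
    have h2 : 1 + (E - 1) / (pj - pj1 * E) * pj1 = (pj - pj1) / (pj - pj1 * E) := by
      have := hD.ne'; rw [div_mul_eq_mul_div, one_add_div this, div_eq_div_iff this this]; ring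
    rw [h1, h2, Real.log_mul (Real.exp_ne_zero _) (ne_of_gt (div_pos hdiff hD)), hE,
      Real.log_exp, hΔ]
    ring
  · intro g1 hg1 heq
    have h1 : 0 < 1 + g1 * pj := by nlinarith
    have h2 : 0 < 1 + g1 * pj1 := by nlinarith
    have hlog : Real.log ((1 + g1 * pj) / (1 + g1 * pj1)) = a * Δ := by
      rw [Real.log_div h1.ne' h2.ne', hΔ]; ring_nf; ring_nf at heq; linarith
    have hexp := congrArg Real.exp hlog
    rw [Real.exp_log (div_pos h1 h2)] at hexp
    have key : 1 + g1 * pj = E * (1 + g1 * pj1) := by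
      rw [div_eq_iff h2.ne'] at hexp
      rw [hE]; linarith [hexp]
    rw [eq_div_iff hD.ne']
    nlinarith [key]
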